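/- arXiv:1502.07532 — 3 statements merged into one kernel-verified Lean document; each statement's English description precedes it below -/
import Mathlib

section
/- For positive weights w_1,...,w_n with max_i w_i / min_i w_i = η, the effective sample size ESS(w) = (Σ w_i)² / (Σ w_i²) satisfies ESS(w) ≥ 4(ηn + 1 − η²)/(η+1)². -/
theorem chopthin_ess_lower_bound (n : ℕ) (hn : 1 ≤ n) (w : Fin n → ℝ)
    (hw : ∀ i, 0 < w i) (η : ℝ)
    (hη : η = (Finset.univ.sup' (Finset.univ_nonempty_iff.mpr (Fin.pos_iff_nonempty.mp hn)) w) /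
              (Finset.univ.inf' (Finset.univ_nonempty_iff.mpr (Fin.pos_iff_nonempty.mp hn)) w)) :
    (∑ i, w i) ^ 2 / (∑ i, w i ^ 2) ≥ 4 * (η * n + 1 - η ^ 2) / (η + 1) ^ 2 := by
  have hne : (Finset.univ : Finset (Fin n)).Nonempty :=
    Finset.univ_nonempty_iff.mpr (Fin.pos_iff_nonempty.mp hn)
  set m := Finset.univ.inf' hne w with hm
  set M := Finset.univ.sup' hne w with hM
  obtain ⟨i0, _, hi0⟩ := Finset.exists_mem_eq_inf' hne w
  have hm_pos : 0 < m := by rw [hm, hi0]; exact hw i0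
  have hmle : ∀ i, m ≤ w i := fun i => Finset.inf'_le w (Finset.mem_univ i)
  have hleM : ∀ i, w i ≤ M := fun i => Finset.le_sup' w (Finset.mem_univ i)
  have hmM : m ≤ M := le_trans (hmle i0) (hleM i0)
  set S := ∑ i, w i with hS
  set Q := ∑ i, w i ^ 2 with hQ
  have hQpos : 0 < Q := Finset.sum_pos (fun i _ => pow_pos (hw i) 2) hne
  have hSge : (n : ℝ) * m ≤ S := by
    calc (n : ℝ) * m = ∑ _i : Fin n, m := by simp [mul_comm]
    _ ≤ S := Finset.sum_le_sum (fun i _ => hmle i)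
  have hQle : Q ≤ (m + M) * S - (n : ℝ) * m * M := by
    have : Q ≤ ∑ i, ((m + M) * w i - m * M) := by
      refine Finset.sum_le_sum (fun i _ => ?_)
      nlinarith [mul_nonneg (sub_nonneg.mpr (hmle i)) (sub_nonneg.mpr (hleM i))]
    calc Q ≤ ∑ i, ((m + M) * w i - m * M) := this
    _ = (m + M) * S - (n : ℝ) * m * M := by
        rw [Finset.sum_sub_distrib, ← Finset.mul_sum]; simp [mul_comm, mul_assoc]; ring
  have hηval : η = M / m := hη
  have hη1 : 1 ≤ η := by
    rw [hηval]; exact (one_le_div hm_pos).mpr hmM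
  have hden : (0:ℝ) < (η + 1) ^ 2 := by positivity
  rw [ge_iff_le, div_le_div_iff₀ hden hQpos]
  have hMm : M = η * m := by rw [hηval]; field_simp
  rw [hMm] at hQle hmM
  nlinarith [sq_nonneg ((η * m + m) * S - 2 * (n : ℝ) * m * (η * m)),
    mul_nonneg (mul_nonneg (sub_nonneg.mpr hη1) (le_of_lt hQpos)) (le_of_lt hm_pos),
    mul_nonneg (mul_nonneg (sub_nonneg.mpr hη1) (add_nonneg (le_of_lt hm_pos) (le_of_lt hm_pos))) (le_of_lt hQpos),
    mul_pos hm_pos hm_pos, mul_le_mul_of_nonneg_left hQle (le_of_lt (mul_pos (mul_pos (by positivity : (0:ℝ) < 4 * η) (by exact_mod_cast Nat.cast_pos.mpr (by omega) : (0:ℝ) < (n:ℝ))) hm_pos)),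
    mul_pos hQpos hm_pos]
end

section
/- For η > 1, n ≥ 2, the function h(x) = (x + η(n−x))² / (x − 1 + (n−x+1)η²) satisfies h(x) ≥ 4(ηn + 1 − η²)/(η+1)² for all x in [1, n−1]. -/
theorem h_lower_bound (η : ℝ) (hη : 1 < η) (n : ℕ) (hn : 2 ≤ n)
    (hden : ∀ x ∈ Set.Icc (1 : ℝ) (n - 1), 0 < x - 1 + (n - x + 1) * η ^ 2) :
    ∀ x ∈ Set.Icc (1 : ℝ) (n - 1),
      (x + η * (n - x)) ^ 2 / (x - 1 + (n - x + 1) * η ^ 2) ≥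
        4 * (η * n + 1 - η ^ 2) / (η + 1) ^ 2 := by
  intro x hx
  have hD := hden x hx
  have hsq : (0:ℝ) < (η + 1) ^ 2 := by positivity
  rw [ge_iff_le, div_le_div_iff₀ hsq hD]
  nlinarith [sq_nonneg ((η + 1) * (x + η * ((n:ℝ) - x)) - 2 * (η * n + 1 - η ^ 2))]
end

section
/- The constraint that ⌈w/(ηa)⌉ ≤ ⌊w/a⌋ holds for all w ≥ a forces η ≥ 2. -/
theorem step_chopthin_eta_ge_two (a η : ℝ) (ha : 0 < a) (hη : 0 < η)
    (h : ∀ w : ℝ, a ≤ w → ⌈w / (η * a)⌉ ≤ ⌊w / a⌋) :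
    2 ≤ η := by
  by_contra hlt
  push_neg at hlt
  set m : ℝ := max 1 η with hm
  have hm1 : 1 ≤ m := le_max_left _ _
  have hm2 : m < 2 := max_lt one_lt_two hlt
  set w : ℝ := (m + 2) / 2 * a with hw
  have haw : a ≤ w := by nlinarith
  have key := h w haw
  have h1 : w / a < 2 := by
    rw [div_lt_iff₀ ha]; nlinarith
  have h2 : 1 ≤ w / a := by
    rw [le_div_iff₀ ha]; nlinarith
  have hfl : ⌊w / a⌋ = 1 := by
    rw [Int.floor_eq_iff]
    constructor <;> push_cast <;> linarith
  have hηm : η ≤ m := le_max_right _ _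
  have h3 : 1 < w / (η * a) := by
    rw [lt_div_iff₀ (by positivity)]
    nlinarith
  have hcl : 2 ≤ ⌈w / (η * a)⌉ := by
    have : (1:ℤ) < ⌈w / (η * a)⌉ := Int.lt_ceil.mpr (by exact_mod_cast h3)
    omega
  omega
end
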